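/- arXiv:2411.05124 — 2 statements merged into one kernel-verified Lean document; each statement's English description precedes it below -/
import Mathlib

section
/- Fix M > 0, ℓ ∈ (2√3 M, 4M), and let r_- = r_-(ℓ) satisfy r_-² − (ℓ²/M) r_- + 3ℓ² = 0 with 4M < r_- < 6M, E_-(ℓ)² = V_ℓ(r_-), and a(ℓ) = 2M² r_-³/(ℓ²(4M − r_-)(r_- − 3M)). Suppose E ∈ (0,1) and p, r > 2M satisfy the mass-shell relation E² = p² + V_ℓ(r), where V_ℓ(r) = (1 − 2M/r)(1 + ℓ²/r²). Then 2M/(1 − E²) − 2M/(1 − E_-(ℓ)²) = (r³/(r² − (ℓ²/(2M)) r + ℓ²)) · ( p²/(1 − E²) + (1 + a(ℓ)/r)(1 − r_- /r)² ). -/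
set_option maxHeartbeats 2000000


/-- the factorized mass-shell identity for the conserved quantity
`H_ℓ(E) = 2M/(1−E²) − 2M/(1−E_-(ℓ)²)` when `ℓ ∈ (2√3 M, 4M)`. -/
theorem factorized_mass_shell_identity
    (M ℓ rm Em E p r : ℝ) (hM : 0 < M)
    (hl1 : 2 * Real.sqrt 3 * M < ℓ) (hl2 : ℓ < 4 * M)
    (hroot : rm ^ 2 - (ℓ ^ 2 / M) * rm + 3 * ℓ ^ 2 = 0)
    (hrm1 : 4 * M < rm) (hrm2 : rm < 6 * M)
    (hEm : Em ^ 2 = (1 - 2 * M / rm) * (1 + ℓ ^ 2 / rm ^ 2))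
    (hE0 : 0 < E) (hE1 : E < 1) (hp : 2 * M < p) (hr : 2 * M < r)
    (hms : E ^ 2 = p ^ 2 + (1 - 2 * M / r) * (1 + ℓ ^ 2 / r ^ 2)) :
    2 * M / (1 - E ^ 2) - 2 * M / (1 - Em ^ 2)
      = r ^ 3 / (r ^ 2 - ℓ ^ 2 / (2 * M) * r + ℓ ^ 2) *
          (p ^ 2 / (1 - E ^ 2) +
            (1 + (2 * M ^ 2 * rm ^ 3 / (ℓ ^ 2 * (4 * M - rm) * (rm - 3 * M))) / r) *
              (1 - rm / r) ^ 2) := by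
  have hl0 : 0 < ℓ := lt_trans (by positivity) hl1
  have h3 : (0:ℝ) < rm - 3 * M := by linarith
  have h4 : (0:ℝ) < rm - 4 * M := by linarith
  have hrpos : (0:ℝ) < r := by linarith
  have hrne : r ≠ 0 := hrpos.ne'
  have hrmne : rm ≠ 0 := by nlinarith
  have hMne : M ≠ 0 := hM.ne'
  have hE2 : (1 : ℝ) - E ^ 2 ≠ 0 := by nlinarith
  have h4ne : 4 * M - rm ≠ 0 := by linarith
  have h4ne' : rm - 4 * M ≠ 0 := h4.ne'
  have h3ne : rm - 3 * M ≠ 0 := h3.ne'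
  have hlne : ℓ ≠ 0 := hl0.ne'
  have hl16 : ℓ ^ 2 < 16 * M ^ 2 := by nlinarith
  -- positivity of the quadratic denominator
  have hQeq : r ^ 2 - ℓ ^ 2 / (2 * M) * r + ℓ ^ 2
      = ((4 * M * r - ℓ ^ 2) ^ 2 + ℓ ^ 2 * (16 * M ^ 2 - ℓ ^ 2)) / (16 * M ^ 2) := by
    field_simp
    ring
  have hQpos : 0 < r ^ 2 - ℓ ^ 2 / (2 * M) * r + ℓ ^ 2 := by
    rw [hQeq]
    have h16 : 0 < ℓ ^ 2 * (16 * M ^ 2 - ℓ ^ 2) :=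
      mul_pos (by positivity) (by linarith)
    positivity
  have hQne : r ^ 2 - ℓ ^ 2 / (2 * M) * r + ℓ ^ 2 ≠ 0 := hQpos.ne'
  -- the root relation
  have hL : ℓ ^ 2 * (rm - 3 * M) = M * rm ^ 2 := by
    have h := hroot
    field_simp at h
    linear_combination -h
  have hL' : ℓ ^ 2 = M * rm ^ 2 / (rm - 3 * M) := by
    rw [eq_div_iff h3ne]
    linarith [hL]
  have hEmval : 1 - Em ^ 2 = M * (rm - 4 * M) / (rm * (rm - 3 * M)) := by
    rw [hEm]
    have h3ne'' : rm - M * 3 ≠ 0 := by linarith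
    field_simp
    ring_nf
    linear_combination (-(rm - 2*M)) * hL
  have hp2 : p ^ 2 = E ^ 2 - (1 - 2 * M / r) * (1 + ℓ ^ 2 / r ^ 2) := by linarith [hms]
  have h4ne'' : rm - M * 4 ≠ 0 := by linarith
  have h4ne''' : M * 4 - rm ≠ 0 := by linarith
  have h3ne'' : rm - M * 3 ≠ 0 := by linarith
  rw [div_mul_eq_mul_div, eq_div_iff hQne, hEmval, hp2, hL']
  field_simp
  ring
end

section
/- Fix M > 0 and consider the planar ODE system dr/ds = p, dp/ds = −(M/r⁴)(r − 4M)(r − 12M) on the domain r > 2M (the radial geodesic flow with angular momentum ℓ = 4M). Define ψ_±(r, p) = p ± (√(2M)/√r)(1 − 4M/r). Then along any solution, d/ds ψ_±(r(s), p(s)) = ∓ (√(2M)/(2 r(s)^{3/2})) (1 − 12M/r(s)) ψ_±(r(s), p(s)). -/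
/-- evolution of the defining functions `ψ_±` of the
stable/unstable manifolds of the fixed point `(4M, 0)` of the radial flow
with angular momentum `ℓ = 4M`. -/
theorem psi_evolution_four_M
    (M : ℝ) (hM : 0 < M) (r p : ℝ → ℝ)
    (hr : ∀ s, 2 * M < r s)
    (hr' : ∀ s, HasDerivAt r (p s) s)
    (hp' : ∀ s, HasDerivAt p (-(M / (r s) ^ 4) * (r s - 4 * M) * (r s - 12 * M)) s)
    (ε : ℝ) (hε : ε = 1 ∨ ε = -1) (s : ℝ) :
    HasDerivAt
      (fun s => p s + ε * (Real.sqrt (2 * M) / Real.sqrt (r s)) * (1 - 4 * M / r s))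
      (-ε * (Real.sqrt (2 * M) / (2 * (r s) ^ ((3 : ℝ) / 2))) * (1 - 12 * M / r s) *
        (p s + ε * (Real.sqrt (2 * M) / Real.sqrt (r s)) * (1 - 4 * M / r s))) s := by
  have hx : 0 < r s := lt_trans (by positivity) (hr s)
  have hsx : 0 < Real.sqrt (r s) := Real.sqrt_pos.mpr hx
  have hsq : Real.sqrt (r s) * Real.sqrt (r s) = r s := Real.mul_self_sqrt hx.le
  have h2M : Real.sqrt (2 * M) * Real.sqrt (2 * M) = 2 * M :=
    Real.mul_self_sqrt (by positivity)
  -- derivative of √(r s)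
  have h1 : HasDerivAt (fun s => Real.sqrt (r s)) (1 / (2 * Real.sqrt (r s)) * p s) s :=
    (Real.hasDerivAt_sqrt hx.ne').comp s (hr' s)
  -- derivative of √(2M)/√(r s)
  have h2 : HasDerivAt (fun s => Real.sqrt (2 * M) / Real.sqrt (r s))
      ((0 * Real.sqrt (r s) - Real.sqrt (2 * M) * (1 / (2 * Real.sqrt (r s)) * p s)) /
        (Real.sqrt (r s)) ^ 2) s :=
    (hasDerivAt_const s (Real.sqrt (2 * M))).div h1 hsx.ne'
  -- derivative of 1 - 4M/(r s)
  have h3 : HasDerivAt (fun s => 1 - 4 * M / r s)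
      (0 - (0 * r s - 4 * M * p s) / (r s) ^ 2) s :=
    (hasDerivAt_const s 1).sub ((hasDerivAt_const s (4 * M)).div (hr' s) hx.ne')
  have h4 := (hp' s).add (((h2.const_mul ε).mul h3))
  convert h4 using 1
  case e'_4 => rfl
  case e'_5 => rfl
  case e'_8 => rfl
  have hrpow : (r s) ^ ((3 : ℝ) / 2) = r s * Real.sqrt (r s) := by
    rw [show ((3 : ℝ) / 2) = 1 + 1 / 2 by norm_num, Real.rpow_add hx, Real.rpow_one,
      ← Real.sqrt_eq_rpow]
  rw [hrpow]
  set a := Real.sqrt (r s) with ha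
  set b := Real.sqrt (2 * M) with hb
  have hra : r s = a ^ 2 := by rw [ha, sq, hsq]
  have hMb : M = b ^ 2 / 2 := by rw [hb, sq, h2M]; ring
  rw [hra, hMb]
  have ha0 : a ≠ 0 := hsx.ne'
  rcases hε with h | h <;> subst h <;> field_simp <;> ring
end
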